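/- Every external line meets a Conwell heptad in either 0 or exactly 2 points: if H is a Conwell heptad and L is a 3-element set of nonzero vectors of (Fin 6 → ZMod 2), each with Q-value 1, whose sum is 0, then the cardinality of L ∩ H is 0 or 2. -/
import Mathlib

/-- The hyperbolic quadratic form on GF(2)^6. -/
def Q (v : Fin 6 → ZMod 2) : ZMod 2 := v 0 * v 1 + v 2 * v 3 + v 4 * v 5

/-- A Conwell heptad: a set of seven off-quadric points such that the line joining any
two of them is external to the quadric. -/
def IsConwellHeptad (H : Finset (Fin 6 → ZMod 2)) : Prop :=
  H.card = 7 ∧ (∀ v ∈ H, v ≠ 0 ∧ Q v = 1) ∧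
    ∀ a ∈ H, ∀ b ∈ H, a ≠ b → Q (a + b) = 1

/-- The polar bilinear form of `Q`. -/
def Bf (a b : Fin 6 → ZMod 2) : ZMod 2 :=
  a 0 * b 1 + a 1 * b 0 + a 2 * b 3 + a 3 * b 2 + a 4 * b 5 + a 5 * b 4

lemma Q_add (x y : Fin 6 → ZMod 2) : Q (x + y) = Q x + Q y + Bf x y := by
  simp only [Q, Bf, Pi.add_apply]; ring

lemma Bf_add_left (x y d : Fin 6 → ZMod 2) : Bf (x + y) d = Bf x d + Bf y d := by
  simp only [Bf, Pi.add_apply]; ring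

lemma Bf_add_right (x y d : Fin 6 → ZMod 2) : Bf d (x + y) = Bf d x + Bf d y := by
  simp only [Bf, Pi.add_apply]; ring

lemma vadd_self (x : Fin 6 → ZMod 2) : x + x = 0 := by
  funext i
  have : ∀ a : ZMod 2, a + a = 0 := by decide
  exact this (x i)

lemma one_add_one : (1 : ZMod 2) + 1 = 0 := by decide

/-- For distinct heptad points, the bilinear form is 1. -/
lemma heptad_Bf {H : Finset (Fin 6 → ZMod 2)} (hH : IsConwellHeptad H)
    {a b : Fin 6 → ZMod 2} (ha : a ∈ H) (hb : b ∈ H) (hab : a ≠ b) : Bf a b = 1 := by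
  have h1 := (hH.2.1 a ha).2
  have h2 := (hH.2.1 b hb).2
  have h3 := hH.2.2 a ha b hb hab
  rw [Q_add, h1, h2, one_add_one, zero_add] at h3
  exact h3

/-- No three points of a Conwell heptad are collinear. -/
lemma no_three_collinear {H : Finset (Fin 6 → ZMod 2)} (hH : IsConwellHeptad H)
    {a b c : Fin 6 → ZMod 2} (ha : a ∈ H) (hb : b ∈ H) (hc : c ∈ H)
    (hab : a ≠ b) (hac : a ≠ c) (hbc : b ≠ c) (hsum : a + b + c = 0) : False := by
  -- find a fourth point
  have hcard : 1 ≤ (H \ {a, b, c}).card := by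
    have h1 : ({a, b, c} : Finset (Fin 6 → ZMod 2)).card ≤ 3 := by
      apply le_trans (Finset.card_insert_le _ _)
      have := Finset.card_insert_le b ({c} : Finset (Fin 6 → ZMod 2))
      simp at this ⊢
      omega
    have h2 := Finset.le_card_sdiff ({a, b, c} : Finset (Fin 6 → ZMod 2)) H
    have h7 := hH.1
    omega
  obtain ⟨d, hd⟩ := Finset.card_pos.mp hcard
  rw [Finset.mem_sdiff] at hd
  obtain ⟨hdH, hdnot⟩ := hd
  simp only [Finset.mem_insert, Finset.mem_singleton] at hdnot
  push_neg at hdnot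
  obtain ⟨hda, hdb, hdc⟩ := hdnot
  have hcab : c = a + b := by
    have h := vadd_self a
    have h2 := vadd_self b
    linear_combination hsum - h - h2
  have h1 : Bf c d = 1 := heptad_Bf hH hc hdH (fun h => hdc h.symm)
  have h2 : Bf a d = 1 := heptad_Bf hH ha hdH (fun h => hda h.symm)
  have h3 : Bf b d = 1 := heptad_Bf hH hb hdH (fun h => hdb h.symm)
  rw [hcab, Bf_add_left, h2, h3, one_add_one] at h1
  exact zero_ne_one h1

/-- Every off-quadric point is in the heptad or a sum of two distinct heptad points. -/
lemma heptad_cover {H : Finset (Fin 6 → ZMod 2)} (hH : IsConwellHeptad H)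
    {v : Fin 6 → ZMod 2} (hv : Q v = 1) (hvH : v ∉ H) :
    ∃ e ∈ H, ∃ f ∈ H, e ≠ f ∧ v = e + f := by
  classical
  set S : Finset (Fin 6 → ZMod 2) := Finset.univ.filter (fun v => Q v = 1) with hS
  have hScard : S.card = 28 := by decide
  set P : Finset (Fin 6 → ZMod 2) := (H.powersetCard 2).image (fun s => ∑ x ∈ s, x) with hP
  -- sums of pairs are pairwise distinct
  have hinj : Set.InjOn (fun s : Finset (Fin 6 → ZMod 2) => ∑ x ∈ s, x) (H.powersetCard 2) := by
    intro s hs t ht hst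
    rw [Finset.mem_coe, Finset.mem_powersetCard] at hs ht
    obtain ⟨hsH, hs2⟩ := hs
    obtain ⟨htH, ht2⟩ := ht
    obtain ⟨c, d, hcd, rfl⟩ := Finset.card_eq_two.mp hs2
    obtain ⟨e, f, hef, rfl⟩ := Finset.card_eq_two.mp ht2
    have hc : c ∈ H := hsH (by simp)
    have hd : d ∈ H := hsH (by simp)
    have he : e ∈ H := htH (by simp)
    have hf : f ∈ H := htH (by simp)
    simp only [Finset.sum_pair hcd, Finset.sum_pair hef] at hst
    by_cases hce : c = e
    · subst hce
      have : d = f := by linear_combination hst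
      subst this; rfl
    · by_cases hcf : c = f
      · subst hcf
        have : d = e := by linear_combination hst
        subst this
        rw [Finset.pair_comm]
      · -- c distinct from e and f
        exfalso
        have h1 : Bf c e = 1 := heptad_Bf hH hc he hce
        have h2 : Bf c f = 1 := heptad_Bf hH hc hf hcf
        have hdc : c ≠ d := hcd
        have h3 : Bf c d = 1 := heptad_Bf hH hc hd hdc
        have h4 : Bf c (c + d) = 1 := by
          rw [Bf_add_right, h3]
          have : Bf c c = 0 := by
            have h : Bf c c = 2 * Q c := by simp only [Bf, Q]; ring
            rw [h]; have h2' : (2 : ZMod 2) = 0 := by decide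
            rw [h2', zero_mul]
          rw [this, zero_add]
        rw [hst, Bf_add_right, h1, h2, one_add_one] at h4
        exact zero_ne_one h4
  have hPcard : P.card = 21 := by
    rw [hP, Finset.card_image_of_injOn hinj, Finset.card_powersetCard, hH.1]; rfl
  -- H and P are disjoint
  have hdisj : Disjoint H P := by
    rw [Finset.disjoint_right]
    intro x hxP hxH
    simp only [hP, Finset.mem_image, Finset.mem_powersetCard] at hxP
    obtain ⟨s, ⟨hsH, hs2⟩, hsum⟩ := hxP
    obtain ⟨e, f, hef, rfl⟩ := Finset.card_eq_two.mp hs2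
    have he : e ∈ H := hsH (by simp)
    have hf : f ∈ H := hsH (by simp)
    rw [Finset.sum_pair hef] at hsum
    have hxe : x ≠ e := by
      rintro rfl
      have : f = 0 := by linear_combination hsum
      exact ((hH.2.1 f hf).1 this).elim
    have hxf : x ≠ f := by
      rintro rfl
      have : e = 0 := by linear_combination hsum
      exact ((hH.2.1 e he).1 this).elim
    exact no_three_collinear hH he hf hxH hef (fun h => hxe h.symm) (fun h => hxf h.symm)
      (by linear_combination hsum + vadd_self x)
  -- H ∪ P ⊆ S with equal cards
  have hsub : H ∪ P ⊆ S := by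
    intro x hx
    rw [Finset.mem_union] at hx
    simp only [hS, Finset.mem_filter, Finset.mem_univ, true_and]
    rcases hx with hx | hx
    · exact (hH.2.1 x hx).2
    · simp only [hP, Finset.mem_image, Finset.mem_powersetCard] at hx
      obtain ⟨s, ⟨hsH, hs2⟩, hsum⟩ := hx
      obtain ⟨e, f, hef, rfl⟩ := Finset.card_eq_two.mp hs2
      have he : e ∈ H := hsH (by simp)
      have hf : f ∈ H := hsH (by simp)
      rw [Finset.sum_pair hef] at hsum
      rw [← hsum]
      exact hH.2.2 e he f hf hef
  have hcardU : (H ∪ P).card = 28 := by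
    rw [Finset.card_union_of_disjoint hdisj, hH.1, hPcard]
  have hEq : H ∪ P = S := Finset.eq_of_subset_of_card_le hsub (by rw [hScard, hcardU])
  have hvS : v ∈ S := by simp [hS, hv]
  rw [← hEq, Finset.mem_union] at hvS
  rcases hvS with h | h
  · exact (hvH h).elim
  · simp only [hP, Finset.mem_image, Finset.mem_powersetCard] at h
    obtain ⟨s, ⟨hsH, hs2⟩, hsum⟩ := h
    obtain ⟨e, f, hef, rfl⟩ := Finset.card_eq_two.mp hs2
    have he : e ∈ H := hsH (by simp)
    have hf : f ∈ H := hsH (by simp)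
    rw [Finset.sum_pair hef] at hsum
    exact ⟨e, he, f, hf, hef, hsum.symm⟩

/-- Every external line meets a Conwell heptad in either 0 or exactly 2 points. -/
theorem external_line_meets_heptad_in_zero_or_two (H L : Finset (Fin 6 → ZMod 2))
    (hH : IsConwellHeptad H) (hL3 : L.card = 3)
    (hLpts : ∀ v ∈ L, v ≠ 0 ∧ Q v = 1) (hLsum : (∑ v ∈ L, v) = 0) :
    (L ∩ H).card = 0 ∨ (L ∩ H).card = 2 := by
  classical
  have hle : (L ∩ H).card ≤ 3 := by
    calc (L ∩ H).card ≤ L.card := Finset.card_le_card Finset.inter_subset_left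
    _ = 3 := hL3
  have hcases : (L ∩ H).card = 0 ∨ (L ∩ H).card = 1 ∨ (L ∩ H).card = 2 ∨ (L ∩ H).card = 3 := by
    omega
  rcases hcases with h | h | h | h
  · exact Or.inl h
  · -- exactly one point: contradiction
    exfalso
    obtain ⟨a, ha⟩ := Finset.card_eq_one.mp h
    have haL : a ∈ L := by
      have : a ∈ L ∩ H := ha ▸ Finset.mem_singleton_self a
      exact Finset.mem_of_mem_inter_left this
    have haH : a ∈ H := by
      have : a ∈ L ∩ H := ha ▸ Finset.mem_singleton_self a
      exact Finset.mem_of_mem_inter_right this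
    have honly : ∀ v ∈ L, v ∈ H → v = a := by
      intro v hvL hvH
      have : v ∈ L ∩ H := Finset.mem_inter.mpr ⟨hvL, hvH⟩
      rw [ha, Finset.mem_singleton] at this
      exact this
    -- the other two points
    have herase : (L.erase a).card = 2 := by
      rw [Finset.card_erase_of_mem haL, hL3]
    obtain ⟨b, c, hbc, hbcset⟩ := Finset.card_eq_two.mp herase
    have hbL : b ∈ L := Finset.mem_of_mem_erase (hbcset ▸ (by simp : b ∈ ({b, c} : Finset _)))
    have hcL : c ∈ L := Finset.mem_of_mem_erase (hbcset ▸ (by simp : c ∈ ({b, c} : Finset _)))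
    have hba : b ≠ a := Finset.ne_of_mem_erase (hbcset ▸ (by simp : b ∈ ({b, c} : Finset _)))
    have hca : c ≠ a := Finset.ne_of_mem_erase (hbcset ▸ (by simp : c ∈ ({b, c} : Finset _)))
    have hbH : b ∉ H := fun hbH => hba (honly b hbL hbH)
    have hcH : c ∉ H := fun hcH => hca (honly c hcL hcH)
    have hLeq : L = insert a {b, c} := by
      rw [← hbcset, Finset.insert_erase haL]
    have hsum : a + (b + c) = 0 := by
      rw [hLeq] at hLsum
      rw [Finset.sum_insert (by rw [← hbcset]; exact Finset.notMem_erase a L),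
        Finset.sum_pair hbc] at hLsum
      exact hLsum
    have hcab : c = a + b := by
      linear_combination hsum - vadd_self a - vadd_self b
    -- b is off-quadric, not in H, so b = e + f
    obtain ⟨e, heH, f, hfH, hef, hbef⟩ := heptad_cover hH (hLpts b hbL).2 hbH
    by_cases hae : a = e
    · subst hae
      apply hcH
      have : c = f := by linear_combination hcab + hbef + vadd_self a
      exact this ▸ hfH
    · by_cases haf : a = f
      · subst haf
        apply hcH
        have : c = e := by linear_combination hcab + hbef + vadd_self a
        exact this ▸ heH
      · -- a ∉ {e, f}: Bf a b = 0 but must be 1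
        have h1 : Bf a e = 1 := heptad_Bf hH haH heH hae
        have h2 : Bf a f = 1 := heptad_Bf hH haH hfH haf
        have h3 : Bf a b = 0 := by
          rw [hbef, Bf_add_right, h1, h2, one_add_one]
        have hQc : Q c = 1 := (hLpts c hcL).2
        rw [hcab, Q_add, (hLpts a haL).2, (hLpts b hbL).2, h3, add_zero, one_add_one] at hQc
        exact zero_ne_one hQc
  · exact Or.inr h
  · -- all three in H: contradiction with no_three_collinear
    exfalso
    have hLH : L ∩ H = L := Finset.eq_of_subset_of_card_le Finset.inter_subset_left
      (by rw [h, hL3])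
    have hLsubH : L ⊆ H := Finset.inter_eq_left.mp hLH
    obtain ⟨a, b, c, hab, hac, hbc, rfl⟩ := Finset.card_eq_three.mp hL3
    have hsum : a + b + c = 0 := by
      rw [Finset.sum_insert (by simp [hab, hac]), Finset.sum_pair hbc, ← add_assoc] at hLsum
      exact hLsum
    exact no_three_collinear hH (hLsubH (by simp)) (hLsubH (by simp)) (hLsubH (by simp))
      hab hac hbc hsum
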